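/- Let μ, ν, ρ be probability measures on ℝ^d with finite second moments, where ρ is supported in the closed ball B(0,δ). Then W₂²(μ∗ρ, ν) ≤ W₂²(μ, ν) + (2(E|X| + E|Y|) + δ)·δ, where X ∼ μ, Y ∼ ν and W₂ is the 2-Wasserstein distance. -/

import Mathlib

open MeasureTheory
open scoped ENNReal

/-- Squared 2-Wasserstein distance on `ℝ^d`, as infimum over couplings. -/
noncomputable def W2sq {d : ℕ} (μ ν : Measure (EuclideanSpace ℝ (Fin d))) : ℝ :=
  (⨅ γ : {γ : Measure (EuclideanSpace ℝ (Fin d) × EuclideanSpace ℝ (Fin d)) //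
        γ.map Prod.fst = μ ∧ γ.map Prod.snd = ν},
      ∫⁻ p : EuclideanSpace ℝ (Fin d) × EuclideanSpace ℝ (Fin d),
        ENNReal.ofReal (‖p.1 - p.2‖ ^ 2) ∂γ.1).toReal

/-- Integrating a function of the first coordinate against a product with a probability
measure in the second coordinate. -/
lemma lintegral_fst_prod' {α β : Type*} [MeasurableSpace α] [MeasurableSpace β]
    (μ : Measure α) (ν : Measure β) [SFinite μ] [SFinite ν] [IsProbabilityMeasure ν]
    (f : α → ℝ≥0∞) (hf : Measurable f) :
    ∫⁻ p : α × β, f p.1 ∂(μ.prod ν) = ∫⁻ x, f x ∂μ := by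
  rw [← lintegral_map hf measurable_fst, Measure.map_fst_prod, measure_univ, one_smul]

lemma lintegral_snd_prod' {α β : Type*} [MeasurableSpace α] [MeasurableSpace β]
    (μ : Measure α) (ν : Measure β) [SFinite μ] [SFinite ν] [IsProbabilityMeasure μ]
    (f : β → ℝ≥0∞) (hf : Measurable f) :
    ∫⁻ p : α × β, f p.2 ∂(μ.prod ν) = ∫⁻ y, f y ∂ν := by
  rw [← lintegral_map hf measurable_snd, Measure.map_snd_prod, measure_univ, one_smul]

set_option maxHeartbeats 1000000 in
/-- Perturbation of the Wasserstein distance by convolution with a measure supported in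
`B(0,δ)`: `W₂²(μ∗ρ, ν) ≤ W₂²(μ, ν) + (2(E|X| + E|Y|) + δ)δ`. -/
theorem W2sq_conv_le (d : ℕ) (μ ν ρ : Measure (EuclideanSpace ℝ (Fin d)))
    (hμ : IsProbabilityMeasure μ) (hν : IsProbabilityMeasure ν)
    (hρ : IsProbabilityMeasure ρ)
    (hμ2 : Integrable (fun x => ‖x‖ ^ 2) μ) (hν2 : Integrable (fun x => ‖x‖ ^ 2) ν)
    (δ : ℝ) (hδ : 0 ≤ δ)
    (hρsupp : ρ (Metric.closedBall (0 : EuclideanSpace ℝ (Fin d)) δ)ᶜ = 0) :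
    W2sq ((μ.prod ρ).map fun p => p.1 + p.2) ν ≤
      W2sq μ ν + (2 * ((∫ x, ‖x‖ ∂μ) + ∫ y, ‖y‖ ∂ν) + δ) * δ := by
  classical
  set E := EuclideanSpace ℝ (Fin d)
  set A := ∫ x, ‖x‖ ∂μ with hA_def
  set B := ∫ y, ‖y‖ ∂ν with hB_def
  set C := (2 * (A + B) + δ) * δ with hC_def
  -- integrability of the first moments
  have hnorm_int : ∀ (κ : Measure E), IsProbabilityMeasure κ →
      Integrable (fun x => ‖x‖ ^ 2) κ → Integrable (fun x : E => ‖x‖) κ := by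
    intro κ hκ hκ2
    have hg : Integrable (fun x : E => 1 + ‖x‖ ^ 2) κ := (integrable_const (1 : ℝ)).add hκ2
    refine hg.mono' measurable_norm.aestronglyMeasurable (ae_of_all _ fun x => ?_)
    rw [norm_norm]
    nlinarith [sq_nonneg (‖x‖ - 1), norm_nonneg x]
  have hμ1 : Integrable (fun x : E => ‖x‖) μ := hnorm_int μ hμ hμ2
  have hν1 : Integrable (fun x : E => ‖x‖) ν := hnorm_int ν hν hν2
  have hA : 0 ≤ A := integral_nonneg fun _ => norm_nonneg _
  have hB : 0 ≤ B := integral_nonneg fun _ => norm_nonneg _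
  have hC : 0 ≤ C := by positivity
  -- measurability of the cost
  have hcostm : Measurable fun p : E × E => ENNReal.ofReal (‖p.1 - p.2‖ ^ 2) :=
    (((measurable_fst.sub measurable_snd).norm.pow measurable_const)).ennreal_ofReal
  -- the two infima
  set ILHS : ℝ≥0∞ :=
    ⨅ γ : {γ : Measure (E × E) //
        γ.map Prod.fst = (μ.prod ρ).map (fun p : E × E => p.1 + p.2) ∧ γ.map Prod.snd = ν},
      ∫⁻ p : E × E, ENNReal.ofReal (‖p.1 - p.2‖ ^ 2) ∂γ.1 with hILHS_def
  set I : ℝ≥0∞ :=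
    ⨅ γ : {γ : Measure (E × E) // γ.map Prod.fst = μ ∧ γ.map Prod.snd = ν},
      ∫⁻ p : E × E, ENNReal.ofReal (‖p.1 - p.2‖ ^ 2) ∂γ.1 with hI_def
  -- key coupling construction
  have key : ∀ γ : {γ : Measure (E × E) // γ.map Prod.fst = μ ∧ γ.map Prod.snd = ν},
      ILHS ≤ (∫⁻ p : E × E, ENNReal.ofReal (‖p.1 - p.2‖ ^ 2) ∂γ.1) + ENNReal.ofReal C := by
    rintro ⟨γ, hγ1, hγ2⟩
    haveI hγprob : IsProbabilityMeasure γ := by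
      constructor
      have := congrArg (fun m : Measure E => m Set.univ) hγ1
      simpa [Measure.map_apply measurable_fst MeasurableSet.univ] using this
    set T : (E × E) × E → E × E := fun q => (q.1.1 + q.2, q.1.2) with hT_def
    have hT : Measurable T :=
      (measurable_fst.fst.add measurable_snd).prodMk measurable_fst.snd
    set γ' : Measure (E × E) := (γ.prod ρ).map T with hγ'_def
    have hfst : γ'.map Prod.fst = (μ.prod ρ).map (fun p : E × E => p.1 + p.2) := by
      rw [hγ'_def, Measure.map_map measurable_fst hT]
      have h2 : (Prod.fst ∘ T) =
          (fun p : E × E => p.1 + p.2) ∘ (Prod.map Prod.fst (id : E → E)) := rfl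
      rw [h2, ← Measure.map_map (g := fun p : E × E => p.1 + p.2) (measurable_fst.add measurable_snd)
        (measurable_fst.prodMap measurable_id)]
      congr 1
      rw [← Measure.map_prod_map _ _ measurable_fst measurable_id, hγ1, Measure.map_id]
    have hsnd : γ'.map Prod.snd = ν := by
      rw [hγ'_def, Measure.map_map measurable_snd hT]
      have h2 : (Prod.snd ∘ T) = (Prod.snd ∘ Prod.fst : (E × E) × E → E) := rfl
      rw [h2, ← Measure.map_map measurable_snd measurable_fst, Measure.map_fst_prod,
        measure_univ, one_smul, hγ2]
    -- the cost of the new coupling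
    have hcost1 : (∫⁻ p : E × E, ENNReal.ofReal (‖p.1 - p.2‖ ^ 2) ∂γ') =
        ∫⁻ q : (E × E) × E, ENNReal.ofReal (‖q.1.1 + q.2 - q.1.2‖ ^ 2) ∂(γ.prod ρ) := by
      rw [hγ'_def, lintegral_map hcostm hT]
    -- almost everywhere the perturbation is small
    have hae : ∀ᵐ q ∂(γ.prod ρ), ‖(q : (E × E) × E).2‖ ≤ δ := by
      rw [ae_iff]
      have hset : {q : (E × E) × E | ¬ ‖q.2‖ ≤ δ} =
          (Set.univ : Set (E × E)) ×ˢ (Metric.closedBall (0 : E) δ)ᶜ := by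
        ext q
        simp [Metric.mem_closedBall, dist_zero_right]
      rw [hset, Measure.prod_prod, hρsupp, mul_zero]
    have hpt : ∀ᵐ q ∂(γ.prod ρ), ENNReal.ofReal (‖(q : (E × E) × E).1.1 + q.2 - q.1.2‖ ^ 2) ≤
        ENNReal.ofReal (‖q.1.1 - q.1.2‖ ^ 2) +
          (ENNReal.ofReal (2 * δ * ‖q.1.1‖) + ENNReal.ofReal (2 * δ * ‖q.1.2‖) +
            ENNReal.ofReal (δ ^ 2)) := by
      filter_upwards [hae] with q hq
      have h1 : ‖q.1.1 + q.2 - q.1.2‖ ^ 2 ≤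
          ‖q.1.1 - q.1.2‖ ^ 2 + (2 * δ * ‖q.1.1‖ + 2 * δ * ‖q.1.2‖ + δ ^ 2) := by
        have t0 : q.1.1 + q.2 - q.1.2 = (q.1.1 - q.1.2) + q.2 := by abel
        have t1 : ‖q.1.1 + q.2 - q.1.2‖ ≤ ‖q.1.1 - q.1.2‖ + ‖q.2‖ := by
          rw [t0]; exact norm_add_le _ _
        have t2 : ‖q.1.1 - q.1.2‖ ≤ ‖q.1.1‖ + ‖q.1.2‖ := norm_sub_le _ _
        nlinarith [norm_nonneg (q.1.1 + q.2 - q.1.2), norm_nonneg (q.1.1 - q.1.2),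
          norm_nonneg q.1.1, norm_nonneg q.1.2, norm_nonneg q.2, hq, hδ]
      calc ENNReal.ofReal (‖q.1.1 + q.2 - q.1.2‖ ^ 2)
          ≤ ENNReal.ofReal (‖q.1.1 - q.1.2‖ ^ 2 +
              (2 * δ * ‖q.1.1‖ + 2 * δ * ‖q.1.2‖ + δ ^ 2)) := ENNReal.ofReal_le_ofReal h1
        _ = _ := by
            rw [ENNReal.ofReal_add (by positivity) (by positivity),
              ENNReal.ofReal_add (by positivity) (by positivity),
              ENNReal.ofReal_add (by positivity) (by positivity)]
    -- measurability of the pieces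
    have hm1 : Measurable fun q : (E × E) × E =>
        ENNReal.ofReal (‖q.1.1 - q.1.2‖ ^ 2) := hcostm.comp measurable_fst
    have hm2 : Measurable fun q : (E × E) × E =>
        ENNReal.ofReal (2 * δ * ‖q.1.1‖) :=
      (measurable_const.mul measurable_fst.fst.norm).ennreal_ofReal
    have hm3 : Measurable fun q : (E × E) × E =>
        ENNReal.ofReal (2 * δ * ‖q.1.2‖) :=
      (measurable_const.mul measurable_fst.snd.norm).ennreal_ofReal
    -- evaluate each term
    have e1 : (∫⁻ q : (E × E) × E, ENNReal.ofReal (‖q.1.1 - q.1.2‖ ^ 2) ∂(γ.prod ρ)) =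
        ∫⁻ p : E × E, ENNReal.ofReal (‖p.1 - p.2‖ ^ 2) ∂γ :=
      lintegral_fst_prod' γ ρ _ hcostm
    have e2 : (∫⁻ q : (E × E) × E, ENNReal.ofReal (2 * δ * ‖q.1.1‖) ∂(γ.prod ρ)) =
        ENNReal.ofReal (2 * δ * A) := by
      rw [lintegral_fst_prod' γ ρ (fun p : E × E => ENNReal.ofReal (2 * δ * ‖p.1‖))
        ((measurable_const.mul measurable_fst.norm).ennreal_ofReal)]
      have : (∫⁻ p : E × E, ENNReal.ofReal (2 * δ * ‖p.1‖) ∂γ) =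
          ∫⁻ x : E, ENNReal.ofReal (2 * δ * ‖x‖) ∂μ := by
        rw [← hγ1, lintegral_map (f := fun x : E => ENNReal.ofReal (2 * δ * ‖x‖)) ((measurable_const.mul measurable_norm).ennreal_ofReal)
          measurable_fst]
      rw [this, ← ofReal_integral_eq_lintegral_ofReal (hμ1.const_mul (2 * δ))
        (ae_of_all _ fun x => by positivity), integral_const_mul]
    have e3 : (∫⁻ q : (E × E) × E, ENNReal.ofReal (2 * δ * ‖q.1.2‖) ∂(γ.prod ρ)) =
        ENNReal.ofReal (2 * δ * B) := by
      rw [lintegral_fst_prod' γ ρ (fun p : E × E => ENNReal.ofReal (2 * δ * ‖p.2‖))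
        ((measurable_const.mul measurable_snd.norm).ennreal_ofReal)]
      have : (∫⁻ p : E × E, ENNReal.ofReal (2 * δ * ‖p.2‖) ∂γ) =
          ∫⁻ y : E, ENNReal.ofReal (2 * δ * ‖y‖) ∂ν := by
        rw [← hγ2, lintegral_map (f := fun y : E => ENNReal.ofReal (2 * δ * ‖y‖)) ((measurable_const.mul measurable_norm).ennreal_ofReal)
          measurable_snd]
      rw [this, ← ofReal_integral_eq_lintegral_ofReal (hν1.const_mul (2 * δ))
        (ae_of_all _ fun x => by positivity), integral_const_mul]
    have e4 : (∫⁻ _ : (E × E) × E, ENNReal.ofReal (δ ^ 2) ∂(γ.prod ρ)) =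
        ENNReal.ofReal (δ ^ 2) := by
      rw [lintegral_const, measure_univ, mul_one]
    have hofC : ENNReal.ofReal (2 * δ * A) + ENNReal.ofReal (2 * δ * B) +
        ENNReal.ofReal (δ ^ 2) = ENNReal.ofReal C := by
      rw [← ENNReal.ofReal_add (by positivity) (by positivity),
        ← ENNReal.ofReal_add (by positivity) (by positivity)]
      congr 1
      rw [hC_def]; ring
    have hcost : (∫⁻ p : E × E, ENNReal.ofReal (‖p.1 - p.2‖ ^ 2) ∂γ') ≤
        (∫⁻ p : E × E, ENNReal.ofReal (‖p.1 - p.2‖ ^ 2) ∂γ) + ENNReal.ofReal C := by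
      rw [hcost1]
      calc (∫⁻ q : (E × E) × E, ENNReal.ofReal (‖q.1.1 + q.2 - q.1.2‖ ^ 2) ∂(γ.prod ρ))
          ≤ ∫⁻ q : (E × E) × E, (ENNReal.ofReal (‖q.1.1 - q.1.2‖ ^ 2) +
              (ENNReal.ofReal (2 * δ * ‖q.1.1‖) + ENNReal.ofReal (2 * δ * ‖q.1.2‖) +
                ENNReal.ofReal (δ ^ 2))) ∂(γ.prod ρ) := lintegral_mono_ae hpt
        _ = (∫⁻ q : (E × E) × E, ENNReal.ofReal (‖q.1.1 - q.1.2‖ ^ 2) ∂(γ.prod ρ)) +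
            ((∫⁻ q : (E × E) × E, ENNReal.ofReal (2 * δ * ‖q.1.1‖) ∂(γ.prod ρ)) +
              ((∫⁻ q : (E × E) × E, ENNReal.ofReal (2 * δ * ‖q.1.2‖) ∂(γ.prod ρ)) +
                ∫⁻ _ : (E × E) × E, ENNReal.ofReal (δ ^ 2) ∂(γ.prod ρ))) := by
            rw [lintegral_add_left hm1, lintegral_add_left (f := fun q : (E × E) × E => ENNReal.ofReal (2 * δ * ‖q.1.1‖) +
                ENNReal.ofReal (2 * δ * ‖q.1.2‖)) (hm2.add hm3),
              lintegral_add_left hm2]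
            ac_rfl
        _ = (∫⁻ p : E × E, ENNReal.ofReal (‖p.1 - p.2‖ ^ 2) ∂γ) + ENNReal.ofReal C := by
            rw [e1, e2, e3, e4, ← hofC]; ring
    exact le_trans (iInf_le _ ⟨γ', hfst, hsnd⟩) hcost
  -- main estimate in `ℝ≥0∞`
  have hmain : ILHS ≤ I + ENNReal.ofReal C := by
    rw [hI_def, ENNReal.iInf_add]
    exact le_iInf key
  -- finiteness of `I` via the product coupling
  have hIfin : I ≠ ⊤ := by
    have hcoupl : (μ.prod ν).map Prod.fst = μ ∧ (μ.prod ν).map Prod.snd = ν := by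
      constructor
      · rw [Measure.map_fst_prod, measure_univ, one_smul]
      · rw [Measure.map_snd_prod, measure_univ, one_smul]
    have hle : I ≤ ∫⁻ p : E × E, ENNReal.ofReal (‖p.1 - p.2‖ ^ 2) ∂(μ.prod ν) :=
      iInf_le (fun γ : {γ : Measure (E × E) // γ.map Prod.fst = μ ∧ γ.map Prod.snd = ν} =>
        ∫⁻ p : E × E, ENNReal.ofReal (‖p.1 - p.2‖ ^ 2) ∂γ.1) ⟨μ.prod ν, hcoupl⟩
    have hfin : (∫⁻ p : E × E, ENNReal.ofReal (‖p.1 - p.2‖ ^ 2) ∂(μ.prod ν)) < ⊤ := by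
      have hb : (∫⁻ p : E × E, ENNReal.ofReal (‖p.1 - p.2‖ ^ 2) ∂(μ.prod ν)) ≤
          ∫⁻ p : E × E, (ENNReal.ofReal (2 * ‖p.1‖ ^ 2) +
            ENNReal.ofReal (2 * ‖p.2‖ ^ 2)) ∂(μ.prod ν) := by
        refine lintegral_mono fun p => ?_
        have h1 : ‖p.1 - p.2‖ ^ 2 ≤ 2 * ‖p.1‖ ^ 2 + 2 * ‖p.2‖ ^ 2 := by
          nlinarith [norm_sub_le p.1 p.2, norm_nonneg p.1, norm_nonneg p.2,
            norm_nonneg (p.1 - p.2), sq_nonneg (‖p.1‖ - ‖p.2‖)]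
        calc ENNReal.ofReal (‖p.1 - p.2‖ ^ 2)
            ≤ ENNReal.ofReal (2 * ‖p.1‖ ^ 2 + 2 * ‖p.2‖ ^ 2) := ENNReal.ofReal_le_ofReal h1
          _ = _ := ENNReal.ofReal_add (by positivity) (by positivity)
      have hm1 : Measurable fun p : E × E => ENNReal.ofReal (2 * ‖p.1‖ ^ 2) :=
        (measurable_const.mul (measurable_fst.norm.pow measurable_const)).ennreal_ofReal
      rw [lintegral_add_left hm1] at hb
      rw [lintegral_fst_prod' μ ν (fun x : E => ENNReal.ofReal (2 * ‖x‖ ^ 2))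
        ((measurable_const.mul (measurable_norm.pow measurable_const)).ennreal_ofReal),
        lintegral_snd_prod' μ ν (fun y : E => ENNReal.ofReal (2 * ‖y‖ ^ 2))
        ((measurable_const.mul (measurable_norm.pow measurable_const)).ennreal_ofReal)] at hb
      refine lt_of_le_of_lt hb (ENNReal.add_lt_top.2 ⟨?_, ?_⟩)
      · exact (hμ2.const_mul 2).lintegral_lt_top
      · exact (hν2.const_mul 2).lintegral_lt_top
    exact (lt_of_le_of_lt hle hfin).ne
  -- conclude by taking `toReal`
  have hRfin : I + ENNReal.ofReal C ≠ ⊤ :=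
    ENNReal.add_ne_top.2 ⟨hIfin, ENNReal.ofReal_ne_top⟩
  simp only [W2sq]
  show ILHS.toReal ≤ I.toReal + C
  calc ILHS.toReal ≤ (I + ENNReal.ofReal C).toReal := ENNReal.toReal_mono hRfin hmain
    _ = I.toReal + C := by
        rw [ENNReal.toReal_add hIfin ENNReal.ofReal_ne_top, ENNReal.toReal_ofReal hC]
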